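/- arXiv:2307.10158 — 2 statements merged into one kernel-verified Lean document; each statement's English description precedes it below -/
import Mathlib

section
/- Let pen be a real-valued polyhedral gauge on ℝ^p, i.e. pen(b) = max{⟨u_1,b⟩,…,⟨u_k,b⟩} for finitely many vectors u_1,…,u_k ∈ ℝ^p with u_1 = 0, and let B* = conv{u_1,…,u_k}. Then for every β ∈ ℝ^p and every b in the relative interior of ∂pen(β), the pattern equivalence class C_β equals the relative interior of the normal cone of B* at b, i.e. C_β = ri(N_{B*}(b)). -/
open scoped RealInnerProductSpace

noncomputable section

/-- Convert a plain coordinate vector to an element of Euclidean space. -/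
def toEuc {n : ℕ} (v : Fin n → ℝ) : EuclideanSpace ℝ (Fin n) :=
  (WithLp.equiv 2 (Fin n → ℝ)).symm v

/-- The subdifferential of `φ : ℝ^p → ℝ` at `β`:
`∂φ(β) = {s : φ(β) + ⟪s, b − β⟫ ≤ φ(b) for all b}`. -/
def subdiff {p : ℕ} (φ : EuclideanSpace ℝ (Fin p) → ℝ) (β : EuclideanSpace ℝ (Fin p)) :
    Set (EuclideanSpace ℝ (Fin p)) :=
  {s | ∀ b, φ β + ⟪s, b - β⟫ ≤ φ b}

/-- `S_{X,λpen}(y)`: the set of minimizers of `b ↦ (1/2)‖y − Xb‖₂² + λ·pen(b)`. -/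
def Smin {n p : ℕ} (X : Matrix (Fin n) (Fin p) ℝ) (lam : ℝ)
    (pen : EuclideanSpace ℝ (Fin p) → ℝ) (y : EuclideanSpace ℝ (Fin n)) :
    Set (EuclideanSpace ℝ (Fin p)) :=
  {b | ∀ b', (1/2) * ‖y - toEuc (X.mulVec b)‖^2 + lam * pen b
        ≤ (1/2) * ‖y - toEuc (X.mulVec b')‖^2 + lam * pen (WithLp.toLp 2 b')}

/-- The row space of a matrix `X`: `{Xᵀz : z ∈ ℝ^n}`. -/
def rowSpace {n p : ℕ} (X : Matrix (Fin n) (Fin p) ℝ) : Set (EuclideanSpace ℝ (Fin p)) :=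
  Set.range fun z : EuclideanSpace ℝ (Fin n) => toEuc (X.transpose.mulVec z)

/-- The normal cone of a set `K` at `x`: `{s : ⟪s, b − x⟫ ≤ 0 for all b ∈ K}`. -/
def normalCone' {p : ℕ} (K : Set (EuclideanSpace ℝ (Fin p))) (x : EuclideanSpace ℝ (Fin p)) :
    Set (EuclideanSpace ℝ (Fin p)) :=
  {s | ∀ b ∈ K, ⟪s, b - x⟫ ≤ 0}

/-- The supremum norm `‖x‖_∞` on Euclidean space. -/
def supNorm {p : ℕ} (x : EuclideanSpace ℝ (Fin p)) : ℝ := ⨆ i, abs (x i)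

/-- `F` is an (exposed) face of `P`: `F = {x ∈ P : ⟪a,x⟫ = c}` for some valid inequality
`⟪a,x⟫ ≤ c` of `P`. -/
def IsFace {p : ℕ} (P F : Set (EuclideanSpace ℝ (Fin p))) : Prop :=
  ∃ (a : EuclideanSpace ℝ (Fin p)) (c : ℝ),
    (∀ x ∈ P, ⟪a, x⟫ ≤ c) ∧ F = {x ∈ P | ⟪a, x⟫ = c}

namespace PatternAux

variable {p k : ℕ}

local notation "E" => EuclideanSpace ℝ (Fin p)

/-- `⟪u i, x⟫ ≤ pen x`. -/
lemma pen_le (u : Fin (k + 1) → E) (pen : E → ℝ)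
    (hpen : ∀ x, pen x = Finset.univ.sup' Finset.univ_nonempty fun i => ⟪u i, x⟫)
    (i : Fin (k + 1)) (x : E) : ⟪u i, x⟫ ≤ pen x := by
  rw [hpen]; exact Finset.le_sup' (fun j => ⟪u j, x⟫) (Finset.mem_univ i)

lemma pen_exists (u : Fin (k + 1) → E) (pen : E → ℝ)
    (hpen : ∀ x, pen x = Finset.univ.sup' Finset.univ_nonempty fun i => ⟪u i, x⟫)
    (x : E) : ∃ i, ⟪u i, x⟫ = pen x := by
  obtain ⟨i, _, hi⟩ := Finset.exists_mem_eq_sup' (Finset.univ_nonempty)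
    (fun i : Fin (k+1) => ⟪u i, x⟫)
  exact ⟨i, by rw [hpen, hi]⟩

lemma pen_zero (u : Fin (k + 1) → E) (pen : E → ℝ)
    (hpen : ∀ x, pen x = Finset.univ.sup' Finset.univ_nonempty fun i => ⟪u i, x⟫) :
    pen 0 = 0 := by
  obtain ⟨i, hi⟩ := pen_exists u pen hpen 0
  rw [← hi, inner_zero_right]

lemma pen_add (u : Fin (k + 1) → E) (pen : E → ℝ)
    (hpen : ∀ x, pen x = Finset.univ.sup' Finset.univ_nonempty fun i => ⟪u i, x⟫)
    (x z : E) : pen (x + z) ≤ pen x + pen z := by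
  rw [hpen (x + z)]
  apply Finset.sup'_le
  intro i _
  rw [inner_add_right]
  exact add_le_add (pen_le u pen hpen i x) (pen_le u pen hpen i z)

/-- Characterization of the subdifferential of `pen`. -/
lemma subdiff_mem (u : Fin (k + 1) → E) (pen : E → ℝ)
    (hpen : ∀ x, pen x = Finset.univ.sup' Finset.univ_nonempty fun i => ⟪u i, x⟫)
    {x s : E} :
    s ∈ subdiff pen x ↔ (∀ z, ⟪s, z⟫ ≤ pen z) ∧ ⟪s, x⟫ = pen x := by
  constructor
  · intro h
    have h0 := h 0
    rw [zero_sub, inner_neg_right, pen_zero u pen hpen] at h0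
    have hxle : pen x ≤ ⟪s, x⟫ := by linarith
    have hzle : ∀ z, ⟪s, z⟫ ≤ pen z := by
      intro z
      have h1 := h (x + z)
      rw [add_sub_cancel_left] at h1
      have h2 := pen_add u pen hpen x z
      linarith
    exact ⟨hzle, le_antisymm (hzle x) hxle⟩
  · rintro ⟨h1, h2⟩ y
    have h3 := h1 y
    rw [inner_sub_right, h2]
    linarith

/-- Key inequality: if every index active at `y` is active at `x`, then any subgradient-type
vector `s` with `⟪s,y⟫ = pen y` satisfies `pen x ≤ ⟪s,x⟫`. -/
lemma keyLe (u : Fin (k + 1) → E) (pen : E → ℝ)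
    (hpen : ∀ x, pen x = Finset.univ.sup' Finset.univ_nonempty fun i => ⟪u i, x⟫)
    {x y s : E}
    (hA : ∀ i, ⟪u i, y⟫ = pen y → ⟪u i, x⟫ = pen x)
    (hs1 : ∀ z, ⟪s, z⟫ ≤ pen z) (hs2 : ⟪s, y⟫ = pen y) :
    pen x ≤ ⟪s, x⟫ := by
  classical
  set f : Fin (k + 1) → ℝ := fun j =>
    if ⟪u j, x⟫ = pen x then 1 else (pen y - ⟪u j, y⟫) / (pen x - ⟪u j, x⟫) with hf
  set t : ℝ := Finset.univ.inf' Finset.univ_nonempty f with htdef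
  have hden : ∀ j, ¬(⟪u j, x⟫ = pen x) → 0 < pen x - ⟪u j, x⟫ := fun j hj =>
    sub_pos.2 (lt_of_le_of_ne (pen_le u pen hpen j x) hj)
  have hnum : ∀ j, ¬(⟪u j, x⟫ = pen x) → 0 < pen y - ⟪u j, y⟫ := fun j hj =>
    sub_pos.2 (lt_of_le_of_ne (pen_le u pen hpen j y) (fun h => hj (hA j h)))
  have ht : 0 < t := by
    rw [htdef]
    rw [Finset.lt_inf'_iff]
    intro j _
    rw [hf]
    by_cases hj : ⟪u j, x⟫ = pen x
    · simp [hj]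
    · simp only [hj, if_false]
      exact div_pos (hnum j hj) (hden j hj)
  have hb : ∀ j, ⟪u j, y⟫ - t * ⟪u j, x⟫ ≤ pen y - t * pen x := by
    intro j
    by_cases hj : ⟪u j, x⟫ = pen x
    · rw [hj]
      have := pen_le u pen hpen j y
      linarith
    · have hle : t ≤ (pen y - ⟪u j, y⟫) / (pen x - ⟪u j, x⟫) := by
        have h1 := Finset.inf'_le f (Finset.mem_univ j)
        rw [← htdef] at h1
        rw [hf] at h1
        simp only [if_neg hj] at h1
        exact h1
      have h2 := (le_div_iff₀ (hden j hj)).1 hle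
      nlinarith [hden j hj]
  have h1 : ⟪s, y - t • x⟫ ≤ pen (y - t • x) := hs1 _
  have h2 : pen (y - t • x) ≤ pen y - t * pen x := by
    rw [hpen (y - t • x)]
    apply Finset.sup'_le
    intro j _
    rw [inner_sub_right, real_inner_smul_right]
    exact hb j
  rw [inner_sub_right, real_inner_smul_right, hs2] at h1
  nlinarith

/-- The pattern equivalence via active sets. -/
lemma subdiff_eq_iff (u : Fin (k + 1) → E) (pen : E → ℝ)
    (hpen : ∀ x, pen x = Finset.univ.sup' Finset.univ_nonempty fun i => ⟪u i, x⟫)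
    {x β : E} :
    subdiff pen x = subdiff pen β ↔ ∀ i, (⟪u i, x⟫ = pen x ↔ ⟪u i, β⟫ = pen β) := by
  constructor
  · intro h i
    have hx : u i ∈ subdiff pen x ↔ ⟪u i, x⟫ = pen x := by
      rw [subdiff_mem u pen hpen]
      exact ⟨fun h' => h'.2, fun h' => ⟨fun z => pen_le u pen hpen i z, h'⟩⟩
    have hβ : u i ∈ subdiff pen β ↔ ⟪u i, β⟫ = pen β := by
      rw [subdiff_mem u pen hpen]
      exact ⟨fun h' => h'.2, fun h' => ⟨fun z => pen_le u pen hpen i z, h'⟩⟩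
    rw [← hx, ← hβ, h]
  · intro h
    ext s
    rw [subdiff_mem u pen hpen, subdiff_mem u pen hpen]
    constructor
    · rintro ⟨h1, h2⟩
      exact ⟨h1, le_antisymm (h1 β)
        (keyLe u pen hpen (fun i hi => (h i).1 hi) h1 h2)⟩
    · rintro ⟨h1, h2⟩
      exact ⟨h1, le_antisymm (h1 x)
        (keyLe u pen hpen (fun i hi => (h i).2 hi) h1 h2)⟩

/-- Extension property of the intrinsic interior: a segment from a point of `s` through a
point of the intrinsic interior can be prolonged slightly inside `s`. -/
lemma extend {s : Set E} {c y : E}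
    (hc : c ∈ intrinsicInterior ℝ s) (hy : y ∈ s) :
    ∃ t : ℝ, 0 < t ∧ c + t • (c - y) ∈ s := by
  rw [mem_intrinsicInterior] at hc
  obtain ⟨c', hc', hcc⟩ := hc
  subst hcc
  have hyW : y ∈ affineSpan ℝ s := subset_affineSpan ℝ s hy
  have hmem : ∀ t : ℝ, (c' : E) + t • ((c' : E) - y) ∈ affineSpan ℝ s := by
    intro t
    have h := AffineSubspace.smul_vsub_vadd_mem (affineSpan ℝ s) t c'.2 hyW c'.2
    simpa [vsub_eq_sub, vadd_eq_add, add_comm] using h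
  set f : ℝ → affineSpan ℝ s := fun t => ⟨(c' : E) + t • ((c' : E) - y), hmem t⟩ with hfdef
  have hcont : Continuous f := by
    apply Continuous.subtype_mk
    exact continuous_const.add (continuous_id.smul continuous_const)
  have h0 : f 0 = c' := by
    apply Subtype.ext
    simp [hfdef]
  have hnhds : f ⁻¹' (interior (Subtype.val ⁻¹' s)) ∈ nhds (0 : ℝ) := by
    apply hcont.continuousAt.preimage_mem_nhds
    rw [h0]
    exact isOpen_interior.mem_nhds hc'
  obtain ⟨ε, hε, hball⟩ := Metric.mem_nhds_iff.1 hnhds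
  refine ⟨ε / 2, by positivity, ?_⟩
  have hb : (ε / 2 : ℝ) ∈ Metric.ball (0 : ℝ) ε := by
    simp only [Metric.mem_ball, Real.dist_eq, sub_zero]
    rw [abs_of_pos (by positivity)]
    linarith
  have := hball hb
  have := interior_subset this
  exact this

end PatternAux

/-- For a real-valued polyhedral gauge `pen` with `B* = conv{u_1,…,u_k}`,
the pattern equivalence class `C_β` equals the relative (intrinsic) interior of the normal
cone of `B*` at any `b ∈ ri(∂pen(β))`. -/
theorem pattern_class_eq_ri_normalCone {p k : ℕ}
    (u : Fin (k + 1) → EuclideanSpace ℝ (Fin p)) (hu : u 0 = 0)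
    (pen : EuclideanSpace ℝ (Fin p) → ℝ)
    (hpen : ∀ x, pen x = Finset.univ.sup' Finset.univ_nonempty fun i => ⟪u i, x⟫)
    (β b : EuclideanSpace ℝ (Fin p))
    (hb : b ∈ intrinsicInterior ℝ (subdiff pen β)) :
    {x | subdiff pen x = subdiff pen β}
      = intrinsicInterior ℝ (normalCone' (convexHull ℝ (Set.range u)) b) := by
  classical
  have hbS : b ∈ subdiff pen β := intrinsicInterior_subset hb
  obtain ⟨hb1, hb2⟩ := (PatternAux.subdiff_mem u pen hpen).1 hbS
  obtain ⟨i₀, hi₀⟩ := PatternAux.pen_exists u pen hpen β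
  set N := normalCone' (convexHull ℝ (Set.range u)) b with hNdef
  have hNle : ∀ x : EuclideanSpace ℝ (Fin p), x ∈ N ↔ pen x ≤ ⟪b, x⟫ := by
    intro x
    constructor
    · intro hx
      rw [hpen]
      apply Finset.sup'_le
      intro i _
      have h1 := hx (u i) (subset_convexHull ℝ (Set.range u) (Set.mem_range_self i))
      rw [inner_sub_right] at h1
      have e1 := real_inner_comm x (u i)
      have e2 := real_inner_comm x b
      linarith
    · intro hx v hv
      have hconv : Convex ℝ {v : EuclideanSpace ℝ (Fin p) | ⟪x, v - b⟫ ≤ 0} := by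
        have he : {v : EuclideanSpace ℝ (Fin p) | ⟪x, v - b⟫ ≤ 0}
            = {v | ⟪x, v⟫ ≤ ⟪x, b⟫} := by
          ext w
          simp only [Set.mem_setOf_eq, inner_sub_right]
          constructor <;> intro h <;> linarith
        rw [he]
        refine convex_halfSpace_le ⟨fun a c => inner_add_right x a c, ?_⟩ _
        intro r a
        rw [real_inner_smul_right, smul_eq_mul]
      refine convexHull_min ?_ hconv hv
      rintro w ⟨i, rfl⟩
      simp only [Set.mem_setOf_eq, inner_sub_right]
      have h2 := PatternAux.pen_le u pen hpen i x
      have e1 := real_inner_comm x (u i)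
      have e2 := real_inner_comm x b
      linarith
  have hNmem : ∀ x : EuclideanSpace ℝ (Fin p),
      x ∈ N ↔ (∀ i, ⟪u i, β⟫ = pen β → ⟪u i, x⟫ = pen x) := by
    intro x
    constructor
    · intro hx i hi
      have hxb : ⟪b, x⟫ = pen x := le_antisymm (hb1 x) ((hNle x).1 hx)
      refine le_antisymm (PatternAux.pen_le u pen hpen i x) ?_
      by_contra hlt
      have hlt' : ⟪u i, x⟫ < pen x :=
        lt_of_le_of_ne (PatternAux.pen_le u pen hpen i x) (fun h => hlt (le_of_eq h.symm))
      have hui : u i ∈ subdiff pen β :=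
        (PatternAux.subdiff_mem u pen hpen).2 ⟨fun z => PatternAux.pen_le u pen hpen i z, hi⟩
      obtain ⟨t, ht, hmem⟩ := PatternAux.extend hb hui
      have h5 := ((PatternAux.subdiff_mem u pen hpen).1 hmem).1 x
      rw [inner_add_left, real_inner_smul_left, inner_sub_left, hxb] at h5
      nlinarith
    · intro h
      rw [hNle]
      exact PatternAux.keyLe u pen hpen h hb1 hb2
  ext x
  simp only [Set.mem_setOf_eq]
  rw [PatternAux.subdiff_eq_iff u pen hpen]
  constructor
  · intro hx
    have hxN : x ∈ N := (hNmem x).2 (fun i hi => (hx i).2 hi)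
    have hxW : x ∈ affineSpan ℝ N := subset_affineSpan ℝ N hxN
    set Vsub : Submodule ℝ (EuclideanSpace ℝ (Fin p)) :=
      { carrier := {y | ∀ i, ⟪u i, β⟫ = pen β → ⟪u i, y⟫ = ⟪u i₀, y⟫}
        add_mem' := by
          intro a c ha hc i hi
          rw [inner_add_right, inner_add_right, ha i hi, hc i hi]
        zero_mem' := by
          intro i hi
          simp
        smul_mem' := by
          intro r a ha i hi
          rw [real_inner_smul_right, real_inner_smul_right, ha i hi] } with hVdef
    have hNV : N ⊆ (Vsub : Set (EuclideanSpace ℝ (Fin p))) := by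
      intro y hy i hi
      rw [(hNmem y).1 hy i hi, (hNmem y).1 hy i₀ hi₀]
    have hspanV : ∀ y ∈ affineSpan ℝ N, ∀ i, ⟪u i, β⟫ = pen β → ⟪u i, y⟫ = ⟪u i₀, y⟫ := by
      intro y hy
      have hle : affineSpan ℝ N ≤ Vsub.toAffineSubspace := by
        rw [affineSpan_le]
        intro z hz
        exact Submodule.mem_toAffineSubspace.mpr (hNV hz)
      exact Submodule.mem_toAffineSubspace.mp (hle hy)
    set U : Set (EuclideanSpace ℝ (Fin p)) :=
      ⋂ j, {y | ⟪u j, β⟫ = pen β ∨ ⟪u j, y⟫ < ⟪u i₀, y⟫} with hUdef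
    have hUopen : IsOpen U := by
      apply isOpen_iInter_of_finite
      intro j
      by_cases hj : ⟪u j, β⟫ = pen β
      · have he : {y : EuclideanSpace ℝ (Fin p) | ⟪u j, β⟫ = pen β ∨ ⟪u j, y⟫ < ⟪u i₀, y⟫}
            = Set.univ := by
          ext y
          simp only [Set.mem_setOf_eq, Set.mem_univ, iff_true]
          exact Or.inl hj
        rw [he]; exact isOpen_univ
      · have he : {y : EuclideanSpace ℝ (Fin p) | ⟪u j, β⟫ = pen β ∨ ⟪u j, y⟫ < ⟪u i₀, y⟫}
            = {y | ⟪u j, y⟫ < ⟪u i₀, y⟫} := by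
          ext y
          simp only [Set.mem_setOf_eq]
          exact or_iff_right hj
        rw [he]
        exact isOpen_lt (continuous_const.inner continuous_id) (continuous_const.inner continuous_id)
    have hxU : x ∈ U := by
      rw [hUdef, Set.mem_iInter]
      intro j
      simp only [Set.mem_setOf_eq]
      by_cases hj : ⟪u j, β⟫ = pen β
      · exact Or.inl hj
      · right
        have h1 : ⟪u j, x⟫ < pen x :=
          lt_of_le_of_ne (PatternAux.pen_le u pen hpen j x) (fun h => hj ((hx j).1 h))
        have h2 : ⟪u i₀, x⟫ = pen x := (hx i₀).2 hi₀
        rw [h2]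
        exact h1
    have hUN : ∀ y ∈ affineSpan ℝ N, y ∈ U → y ∈ N := by
      intro y hyW hyU
      apply (hNmem y).2
      intro i hi
      have hpy : pen y = ⟪u i₀, y⟫ := by
        apply le_antisymm
        · rw [hpen]
          apply Finset.sup'_le
          intro j _
          rcases Set.mem_setOf_eq ▸ Set.mem_iInter.1 hyU j with hj | hj
          · rw [hspanV y hyW j hj]
          · exact le_of_lt hj
        · exact PatternAux.pen_le u pen hpen i₀ y
      rw [hspanV y hyW i hi, hpy]
    rw [mem_intrinsicInterior]
    refine ⟨⟨x, hxW⟩, ?_, rfl⟩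
    rw [mem_interior]
    exact ⟨Subtype.val ⁻¹' U, fun z hz => hUN z z.2 hz,
      hUopen.preimage continuous_subtype_val, hxU⟩
  · intro hx
    have hxN : x ∈ N := intrinsicInterior_subset hx
    have hAx := (hNmem x).1 hxN
    intro i
    refine ⟨?_, hAx i⟩
    intro hi
    by_contra hiβ
    have hiβ' : ⟪u i, β⟫ < pen β := lt_of_le_of_ne (PatternAux.pen_le u pen hpen i β) hiβ
    have hβN : β ∈ N := (hNmem β).2 (fun j hj => hj)
    obtain ⟨t, ht, hmem⟩ := PatternAux.extend hx hβN
    have hA' := (hNmem _).1 hmem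
    have h1 := hA' i₀ hi₀
    have h2 := PatternAux.pen_le u pen hpen i (x + t • (x - β))
    rw [inner_add_right, real_inner_smul_right, inner_sub_right, hAx i₀ hi₀, hi₀] at h1
    rw [inner_add_right, real_inner_smul_right, inner_sub_right, hi] at h2
    nlinarith
end
end

section
/- Let X ∈ ℝ^{n×p}, λ > 0, let pen be a real-valued polyhedral gauge on ℝ^p (pen(b) = max{⟨u_1,b⟩,…,⟨u_k,b⟩} with u_1 = 0), and let β ∈ ℝ^p. The following three statements are equivalent: (i) there exist y ∈ ℝ^n and β̂ ∈ S_{X,λpen}(y) with ∂pen(β̂) = ∂pen(β) (i.e. the pattern of β is accessible with respect to X and λ·pen); (ii) row(X) ∩ ∂pen(β) ≠ ∅; (iii) for every b ∈ ℝ^p, Xβ = Xb implies pen(β) ≤ pen(b). -/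
open scoped RealInnerProductSpace

noncomputable section

lemma inner_toEuc_mulVec {n p : ℕ} (X : Matrix (Fin n) (Fin p) ℝ)
    (z : EuclideanSpace ℝ (Fin n)) (w : EuclideanSpace ℝ (Fin p)) :
    ⟪toEuc (X.transpose.mulVec z), w⟫ = ⟪z, toEuc (X.mulVec w)⟫ := by
  simp [toEuc, PiLp.inner_apply, RCLike.inner_apply, Matrix.mulVec, dotProduct,
    Finset.sum_mul, Finset.mul_sum]
  rw [Finset.sum_comm]
  congr 1; ext i; congr 1; ext j; ring

lemma toEuc_mulVec_sub {n p : ℕ} (X : Matrix (Fin n) (Fin p) ℝ)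
    (a b : EuclideanSpace ℝ (Fin p)) :
    toEuc (X.mulVec (a - b)) = toEuc (X.mulVec a) - toEuc (X.mulVec b) := by
  ext i
  simp [toEuc, Matrix.mulVec, dotProduct, PiLp.sub_apply, mul_sub,
    Finset.sum_sub_distrib]

lemma toEuc_mulVec_comb {n p : ℕ} (X : Matrix (Fin n) (Fin p) ℝ)
    (a b : EuclideanSpace ℝ (Fin p)) (t : ℝ) :
    toEuc (X.mulVec (a + t • b)) = toEuc (X.mulVec a) + t • toEuc (X.mulVec b) := by
  ext i
  simp [toEuc, Matrix.mulVec, dotProduct, PiLp.add_apply, PiLp.smul_apply,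
    mul_add, Finset.sum_add_distrib, Finset.mul_sum, smul_eq_mul]
  congr 1; ext j; ring

lemma norm_sub_smul_sq {n : ℕ} (r c : EuclideanSpace ℝ (Fin n)) (t : ℝ) :
    ‖r - t • c‖^2 = ‖r‖^2 - 2*t*⟪r,c⟫ + t^2 * ‖c‖^2 := by
  rw [norm_sub_sq_real, real_inner_smul_right, norm_smul]
  simp [mul_pow]
  ring

lemma small_slope (A C : ℝ) (hC : 0 ≤ C) (h : ∀ t : ℝ, 0 < t → t ≤ 1 → A ≤ t * C) :
    A ≤ 0 := by
  by_contra hA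
  push_neg at hA
  rcases le_or_gt C 0 with hC0 | hC0
  · have := h 1 one_pos le_rfl; nlinarith
  · have ht := h (min 1 (A / (2 * C))) (by positivity) (min_le_left _ _)
    have h2 : min 1 (A / (2 * C)) ≤ A / (2 * C) := min_le_right _ _
    have h3 := mul_le_mul_of_nonneg_right h2 hC
    have h4 : A / (2 * C) * C = A / 2 := by field_simp
    linarith

variable {p k : ℕ}

lemma inner_le_pen (u : Fin (k + 1) → EuclideanSpace ℝ (Fin p))
    (pen : EuclideanSpace ℝ (Fin p) → ℝ)
    (hpen : ∀ x, pen x = Finset.univ.sup' Finset.univ_nonempty fun i => ⟪u i, x⟫)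
    (i : Fin (k + 1)) (x : EuclideanSpace ℝ (Fin p)) : ⟪u i, x⟫ ≤ pen x := by
  rw [hpen]
  exact Finset.le_sup' (fun i => ⟪u i, x⟫) (Finset.mem_univ i)

lemma pen_nonneg (u : Fin (k + 1) → EuclideanSpace ℝ (Fin p)) (hu : u 0 = 0)
    (pen : EuclideanSpace ℝ (Fin p) → ℝ)
    (hpen : ∀ x, pen x = Finset.univ.sup' Finset.univ_nonempty fun i => ⟪u i, x⟫)
    (x : EuclideanSpace ℝ (Fin p)) : 0 ≤ pen x := by
  have := inner_le_pen u pen hpen 0 x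
  rwa [hu, inner_zero_left] at this

lemma pen_combo (u : Fin (k + 1) → EuclideanSpace ℝ (Fin p))
    (pen : EuclideanSpace ℝ (Fin p) → ℝ)
    (hpen : ∀ x, pen x = Finset.univ.sup' Finset.univ_nonempty fun i => ⟪u i, x⟫)
    (x y : EuclideanSpace ℝ (Fin p)) {t : ℝ} (ht0 : 0 ≤ t) (ht1 : t ≤ 1) :
    pen (x + t • (y - x)) ≤ pen x + t * (pen y - pen x) := by
  rw [hpen]
  apply Finset.sup'_le
  intro i _
  have h1 := inner_le_pen u pen hpen i x
  have h2 := inner_le_pen u pen hpen i y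
  rw [inner_add_right, real_inner_smul_right, inner_sub_right]
  nlinarith

section easy
variable {n p k : ℕ} (X : Matrix (Fin n) (Fin p) ℝ) (lam : ℝ)
    (pen : EuclideanSpace ℝ (Fin p) → ℝ) (β : EuclideanSpace ℝ (Fin p))

lemma two_to_one (hlam : 0 < lam)
    (h2 : (rowSpace X ∩ subdiff pen β).Nonempty) :
    ∃ y : EuclideanSpace ℝ (Fin n), ∃ βh ∈ Smin X lam pen y,
      subdiff pen βh = subdiff pen β := by
  obtain ⟨v, ⟨z, hz⟩, hv⟩ := h2
  simp only at hz
  refine ⟨toEuc (X.mulVec β) + lam • z, β, ?_, rfl⟩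
  suffices H : ∀ b' : EuclideanSpace ℝ (Fin p),
      (1/2) * ‖toEuc (X.mulVec β) + lam • z - toEuc (X.mulVec b')‖^2 + lam * pen b'
      ≥ (1/2) * ‖toEuc (X.mulVec β) + lam • z - toEuc (X.mulVec β)‖^2 + lam * pen β by
    intro b'; exact H (WithLp.toLp 2 b')
  intro b'
  set c := toEuc (X.mulVec b') - toEuc (X.mulVec β) with hc
  have e1 : toEuc (X.mulVec β) + lam • z - toEuc (X.mulVec β) = lam • z := by abel
  have e2 : toEuc (X.mulVec β) + lam • z - toEuc (X.mulVec b') = lam • z - c := by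
    rw [hc]; abel
  rw [e1, e2, norm_sub_sq_real]
  have hzc : ⟪lam • z, c⟫ = lam * ⟪v, b' - β⟫ := by
    rw [real_inner_smul_left, hc, ← toEuc_mulVec_sub, ← inner_toEuc_mulVec, hz]; rfl
  have hsub := hv b'
  have hmul : lam * (pen β + ⟪v, b' - β⟫) ≤ lam * pen b' :=
    mul_le_mul_of_nonneg_left hsub (le_of_lt hlam)
  nlinarith [sq_nonneg ‖c‖]

lemma one_to_two (hlam : 0 < lam)
    (hconv : ∀ (x y : EuclideanSpace ℝ (Fin p)) {t : ℝ}, 0 ≤ t → t ≤ 1 →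
      pen (x + t • (y - x)) ≤ pen x + t * (pen y - pen x))
    (h1 : ∃ y : EuclideanSpace ℝ (Fin n), ∃ βh ∈ Smin X lam pen y,
      subdiff pen βh = subdiff pen β) :
    (rowSpace X ∩ subdiff pen β).Nonempty := by
  obtain ⟨y, βh, hmin, hsub⟩ := h1
  set r := y - toEuc (X.mulVec βh) with hr
  refine ⟨toEuc (X.transpose.mulVec (lam⁻¹ • r)), ⟨lam⁻¹ • r, rfl⟩, ?_⟩
  rw [← hsub]
  intro b
  set c := toEuc (X.mulVec b) - toEuc (X.mulVec βh) with hc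
  have key : ⟪r, c⟫ - lam * (pen b - pen βh) ≤ 0 := by
    apply small_slope _ (‖c‖^2 / 2) (by positivity)
    intro t ht0 ht1
    have hm := hmin (βh + t • (b - βh))
    have e1 : y - toEuc (X.mulVec (βh + t • (b - βh))) = r - t • c := by
      rw [toEuc_mulVec_comb, toEuc_mulVec_sub, hc, hr, smul_sub]
      abel
    rw [e1, norm_sub_smul_sq] at hm
    change _ ≤ _ + lam * pen (βh + t • (b - βh)) at hm
    have hpc := hconv βh b (le_of_lt ht0) ht1
    have hmul : lam * pen (βh + t • (b - βh)) ≤ lam * (pen βh + t * (pen b - pen βh)) :=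
      mul_le_mul_of_nonneg_left hpc (le_of_lt hlam)
    have ht0' : (0:ℝ) < t := ht0
    have h5 : t * (⟪r, c⟫ - lam * (pen b - pen βh)) ≤ t * (t * (‖c‖^2 / 2)) := by
      nlinarith
    exact (mul_le_mul_iff_right₀ ht0').mp h5
  have hic : ⟪toEuc (X.transpose.mulVec (lam⁻¹ • r)), b - βh⟫ = lam⁻¹ * ⟪r, c⟫ := by
    rw [inner_toEuc_mulVec, hc, ← toEuc_mulVec_sub]; exact real_inner_smul_left _ _ _
  rw [hic]
  have hl : lam⁻¹ * ⟪r, c⟫ ≤ pen b - pen βh := by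
    rw [inv_mul_le_iff₀ hlam]
    nlinarith
  linarith

lemma two_to_three
    (h2 : (rowSpace X ∩ subdiff pen β).Nonempty) :
    ∀ b, X.mulVec β = X.mulVec b → pen β ≤ pen (WithLp.toLp 2 b) := by
  obtain ⟨v, ⟨z, hz⟩, hv⟩ := h2
  simp only at hz
  suffices H : ∀ b : EuclideanSpace ℝ (Fin p), X.mulVec β = X.mulVec b → pen β ≤ pen b by
    intro b; exact H (WithLp.toLp 2 b)
  intro b hXb
  have h1 := hv b
  have e : ⟪v, b - β⟫ = 0 := by
    rw [← hz, inner_toEuc_mulVec, WithLp.ofLp_sub, toEuc_mulVec_sub, ← hXb]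
    simp
  linarith

end easy


lemma toEuclideanLin_eq_toEuc {n p : ℕ} (X : Matrix (Fin n) (Fin p) ℝ)
    (v : EuclideanSpace ℝ (Fin p)) :
    Matrix.toEuclideanLin X v = toEuc (X.mulVec v) := rfl

lemma mem_rowSpace_of_orth {n p : ℕ} (X : Matrix (Fin n) (Fin p) ℝ)
    (v : EuclideanSpace ℝ (Fin p))
    (hv : v ∈ (LinearMap.ker (Matrix.toEuclideanLin X))ᗮ) : v ∈ rowSpace X := by
  have hRo : (LinearMap.range (Matrix.toEuclideanLin X.transpose))ᗮ
      = LinearMap.ker (Matrix.toEuclideanLin X) := by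
    ext x
    rw [Submodule.mem_orthogonal, LinearMap.mem_ker]
    constructor
    · intro hx
      have h1 : ⟪Matrix.toEuclideanLin X x, Matrix.toEuclideanLin X x⟫ = 0 := by
        have := hx (Matrix.toEuclideanLin X.transpose (Matrix.toEuclideanLin X x))
          ⟨_, rfl⟩
        rwa [toEuclideanLin_eq_toEuc, toEuclideanLin_eq_toEuc, inner_toEuc_mulVec,
          ← toEuclideanLin_eq_toEuc] at this
      exact inner_self_eq_zero.mp h1
    · intro hx w hw
      obtain ⟨z, rfl⟩ := hw
      rw [toEuclideanLin_eq_toEuc, inner_toEuc_mulVec, ← toEuclideanLin_eq_toEuc, hx,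
        inner_zero_right]
  have : v ∈ LinearMap.range (Matrix.toEuclideanLin X.transpose) := by
    rw [← Submodule.orthogonal_orthogonal (LinearMap.range (Matrix.toEuclideanLin X.transpose)),
      hRo]
    exact hv
  obtain ⟨z, hz⟩ := this
  exact ⟨z, by simp only []; rw [← toEuclideanLin_eq_toEuc, hz]⟩

def sumSmul {p k : ℕ} (u : Fin (k+1) → EuclideanSpace ℝ (Fin p)) :
    (Fin (k+1) → ℝ) →ₗ[ℝ] EuclideanSpace ℝ (Fin p) where
  toFun w := ∑ i, w i • u i
  map_add' w₁ w₂ := by simp [add_smul, Finset.sum_add_distrib]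
  map_smul' c w := by simp [smul_smul, Finset.smul_sum]

lemma sumSmul_single {p k : ℕ} (u : Fin (k+1) → EuclideanSpace ℝ (Fin p)) (i : Fin (k+1)) :
    sumSmul u (Pi.single i 1) = u i := by
  simp only [sumSmul, LinearMap.coe_mk, AddHom.coe_mk]
  rw [Finset.sum_eq_single i]
  · simp
  · intro j _ hj; simp [Pi.single_eq_of_ne hj]
  · intro h; exact absurd (Finset.mem_univ i) h

set_option maxHeartbeats 1000000 in
lemma three_to_two {n p k : ℕ} (X : Matrix (Fin n) (Fin p) ℝ)
    (u : Fin (k + 1) → EuclideanSpace ℝ (Fin p)) (hu : u 0 = 0)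
    (pen : EuclideanSpace ℝ (Fin p) → ℝ)
    (hpen : ∀ x, pen x = Finset.univ.sup' Finset.univ_nonempty fun i => ⟪u i, x⟫)
    (β : EuclideanSpace ℝ (Fin p))
    (h3 : ∀ b : EuclideanSpace ℝ (Fin p), X.mulVec β = X.mulVec b → pen β ≤ pen b) :
    (rowSpace X ∩ subdiff pen β).Nonempty := by
  by_cases hpb : pen β ≤ 0
  · refine ⟨0, ⟨0, ?_⟩, ?_⟩
    · show toEuc (X.transpose.mulVec (0 : EuclideanSpace ℝ (Fin n))) = 0
      ext i
      simp [toEuc, Matrix.mulVec, dotProduct]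
    · intro b
      rw [inner_zero_left]
      have := pen_nonneg u hu pen hpen b
      linarith
  push_neg at hpb
  by_contra hii
  set K := LinearMap.ker (Matrix.toEuclideanLin X) with hK
  set S : (Fin (k+1) → ℝ) →ₗ[ℝ] EuclideanSpace ℝ (Fin p) := sumSmul u with hS
  set L : (Fin (k+1) → ℝ) →ₗ[ℝ] (EuclideanSpace ℝ (Fin p) × ℝ) :=
    LinearMap.prod
      ((K.subtype ∘ₗ (K.orthogonalProjectionOnto : EuclideanSpace ℝ (Fin p) →ₗ[ℝ] K)) ∘ₗ S)
      (((innerSL ℝ β).toLinearMap) ∘ₗ S) with hL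
  have hLapp : ∀ w, L w = ((K.orthogonalProjectionOnto (S w) : EuclideanSpace ℝ (Fin p)),
      ⟪β, S w⟫) := by
    intro w
    simp [hL, LinearMap.prod_apply, innerSL_apply_apply]
  set D := L '' stdSimplex ℝ (Fin (k+1)) with hD
  set Ee : Set (EuclideanSpace ℝ (Fin p) × ℝ) := {q | q.1 = 0 ∧ pen β ≤ q.2} with hEe
  -- disjointness
  have hdisj : Disjoint D Ee := by
    rw [Set.disjoint_left]
    rintro q ⟨w, hw, rfl⟩ ⟨hq1, hq2⟩
    rw [hLapp w] at hq1 hq2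
    simp only at hq1 hq2
    apply hii
    refine ⟨S w, ?_, ?_⟩
    · apply mem_rowSpace_of_orth
      rw [← hK, ← Submodule.orthogonalProjectionOnto_eq_zero_iff]
      exact_mod_cast hq1
    · intro b
      have hSb : ⟪S w, b⟫ ≤ pen b := by
        have : ⟪S w, b⟫ = ∑ i, w i * ⟪u i, b⟫ := by
          rw [hS]
          simp only [sumSmul, LinearMap.coe_mk, AddHom.coe_mk]
          rw [sum_inner]
          congr 1; ext i; rw [real_inner_smul_left]
        rw [this]
        calc ∑ i, w i * ⟪u i, b⟫ ≤ ∑ i, w i * pen b := by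
              apply Finset.sum_le_sum
              intro i _
              exact mul_le_mul_of_nonneg_left (inner_le_pen u pen hpen i b) (hw.1 i)
          _ = pen b := by rw [← Finset.sum_mul, hw.2, one_mul]
      have hSβ : pen β ≤ ⟪S w, β⟫ := by rwa [real_inner_comm]
      rw [inner_sub_right]
      linarith
  -- separation
  obtain ⟨f, a, bb, hfa, hab, hbf⟩ := geometric_hahn_banach_compact_closed
    ((convex_stdSimplex ℝ _).linear_image L)
    ((isCompact_stdSimplex _ _).image L.continuous_of_finiteDimensional)
    (by
      intro q hq q' hq' c d hc hd hcd
      constructor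
      · show c • q.1 + d • q'.1 = 0
        rw [hq.1, hq'.1]; simp
      · show pen β ≤ c * q.2 + d * q'.2
        nlinarith [hq.2, hq'.2])
    (by
      have : Ee = (Prod.fst ⁻¹' {(0 : EuclideanSpace ℝ (Fin p))})
          ∩ (Prod.snd ⁻¹' Set.Ici (pen β)) := by
        ext q; simp [hEe, Set.mem_Ici]
      rw [this]
      exact (isClosed_singleton.preimage continuous_fst).inter
        (isClosed_Ici.preimage continuous_snd))
    hdisj
  set σ := f (0, 1) with hσ
  have hfdec : ∀ (x : EuclideanSpace ℝ (Fin p)) (t : ℝ), f (x, t) = f (x, 0) + t * σ := by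
    intro x t
    have : ((x, t) : EuclideanSpace ℝ (Fin p) × ℝ) = (x, 0) + t • ((0 : EuclideanSpace ℝ (Fin p)), (1:ℝ)) := by
      simp [Prod.ext_iff]
    rw [this, map_add, map_smul, smul_eq_mul, hσ]
  have hDa : ∀ i, ⟪(K.orthogonalProjectionOnto (u i) : EuclideanSpace ℝ (Fin p)), 0⟫ = 0 → True := fun _ _ => trivial
  -- vertex facts
  have hvert : ∀ i : Fin (k+1),
      f ((K.orthogonalProjectionOnto (u i) : EuclideanSpace ℝ (Fin p)), ⟪β, u i⟫) < a := by
    intro i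
    have := hfa (L (Pi.single i 1)) ⟨Pi.single i 1, single_mem_stdSimplex ℝ i, rfl⟩
    rwa [hLapp, hS, sumSmul_single] at this
  have h0a : (0:ℝ) < a := by
    have := hvert 0
    rw [hu] at this
    simpa [show ((0 : EuclideanSpace ℝ (Fin p)), (0:ℝ)) = (0 : EuclideanSpace ℝ (Fin p) × ℝ) from rfl] using this
  have hEt : ∀ t : ℝ, pen β ≤ t → bb < t * σ := by
    intro t ht
    have h0' : f ((0 : EuclideanSpace ℝ (Fin p)), (0:ℝ)) = 0 := by
      rw [show ((0 : EuclideanSpace ℝ (Fin p)), (0:ℝ)) = (0 : EuclideanSpace ℝ (Fin p) × ℝ) from rfl,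
        map_zero]
    have := hbf ((0 : EuclideanSpace ℝ (Fin p)), t) ⟨rfl, ht⟩
    rw [hfdec, h0'] at this
    linarith
  have hσpos : 0 < σ := by
    rcases lt_or_ge 0 σ with h | h
    · exact h
    rcases eq_or_lt_of_le h with heq | hlt
    · have := hEt (pen β) le_rfl
      rw [heq, mul_zero] at this
      linarith
    · have h1 := hEt (max (pen β) (bb / σ)) (le_max_left _ _)
      have h2 : max (pen β) (bb / σ) * σ ≤ (bb / σ) * σ :=
        mul_le_mul_of_nonpos_right (le_max_right _ _) h
      rw [div_mul_cancel₀ _ (ne_of_lt hlt)] at h2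
      linarith
  -- the separating vector
  set h' := (InnerProductSpace.toDual ℝ (EuclideanSpace ℝ (Fin p))).symm
    (f.comp (ContinuousLinearMap.inl ℝ (EuclideanSpace ℝ (Fin p)) ℝ)) with hh'def
  have hh' : ∀ x, ⟪h', x⟫ = f (x, 0) := by
    intro x
    rw [hh'def, InnerProductSpace.toDual_symm_apply]
    simp
  set hv := (σ⁻¹ • (K.orthogonalProjectionOnto h' : EuclideanSpace ℝ (Fin p))) with hhv
  have hvK : hv ∈ K := K.smul_mem _ (SetLike.coe_mem _)
  have hlti : ∀ i, ⟪u i, β + hv⟫ < pen β := by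
    intro i
    have h1 := hvert i
    have h2 := hEt (pen β) le_rfl
    rw [hfdec] at h1
    rw [← hh'] at h1
    -- ⟪h', ↑(P (u i))⟫ + ⟪β, u i⟫ * σ < a < bb < pen β * σ
    have h4 : ⟪h', (K.orthogonalProjectionOnto (u i) : EuclideanSpace ℝ (Fin p))⟫
        = ⟪(K.orthogonalProjectionOnto h' : EuclideanSpace ℝ (Fin p)), u i⟫ :=
      (Submodule.inner_starProjection_left_eq_right K h' (u i)).symm
    rw [h4] at h1
    have h5 : ⟪u i, β + hv⟫ * σ
        = ⟪(K.orthogonalProjectionOnto h' : EuclideanSpace ℝ (Fin p)), u i⟫ + ⟪β, u i⟫ * σ := by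
      rw [inner_add_right, hhv, real_inner_smul_right, real_inner_comm (u i) β,
        real_inner_comm (u i)]
      field_simp
      ring
    have h6 : ⟪u i, β + hv⟫ * σ < pen β * σ := by rw [h5]; linarith
    exact lt_of_mul_lt_mul_right (by linarith [h6]) (le_of_lt hσpos) |>.trans_le le_rfl
  -- contradiction with h3
  have hXeq : X.mulVec β = X.mulVec (β + hv) := by
    have hker : X.mulVec hv = 0 := by
      have : Matrix.toEuclideanLin X hv = 0 := LinearMap.mem_ker.mp hvK
      rw [toEuclideanLin_eq_toEuc] at this
      funext i
      have := congrArg (fun v : EuclideanSpace ℝ (Fin n) => v i) this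
      simpa [toEuc] using this
    funext i
    have : X.mulVec (β + hv) i = X.mulVec β i + X.mulVec hv i := by
      simp [Matrix.mulVec, dotProduct, PiLp.add_apply, mul_add,
        Finset.sum_add_distrib]
    rw [this, hker]
    simp
  have := h3 (β + hv) hXeq
  rw [hpen (β + hv)] at this
  have hlt : (Finset.univ.sup' Finset.univ_nonempty fun i => ⟪u i, β + hv⟫) < pen β := by
    rw [Finset.sup'_lt_iff]
    intro i _
    exact hlti i
  linarith


/-- Characterization of accessible patterns: (i) accessibility of the pattern
of `β` w.r.t. `X` and `λ·pen`, (ii) `row(X) ∩ ∂pen(β) ≠ ∅`, and (iii) `Xβ = Xb ⟹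
pen(β) ≤ pen(b)` are all equivalent. -/
theorem accessibility_characterization {n p k : ℕ}
    (X : Matrix (Fin n) (Fin p) ℝ) (lam : ℝ) (hlam : 0 < lam)
    (u : Fin (k + 1) → EuclideanSpace ℝ (Fin p)) (hu : u 0 = 0)
    (pen : EuclideanSpace ℝ (Fin p) → ℝ)
    (hpen : ∀ x, pen x = Finset.univ.sup' Finset.univ_nonempty fun i => ⟪u i, x⟫)
    (β : EuclideanSpace ℝ (Fin p)) :
    ((∃ y : EuclideanSpace ℝ (Fin n), ∃ βh ∈ Smin X lam pen y,
        subdiff pen βh = subdiff pen β)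
      ↔ (rowSpace X ∩ subdiff pen β).Nonempty)
    ∧ ((rowSpace X ∩ subdiff pen β).Nonempty
      ↔ ∀ b, X.mulVec β = X.mulVec b → pen β ≤ pen (WithLp.toLp 2 b)) := by

  have hconv : ∀ (x y : EuclideanSpace ℝ (Fin p)) {t : ℝ}, 0 ≤ t → t ≤ 1 →
      pen (x + t • (y - x)) ≤ pen x + t * (pen y - pen x) :=
    fun x y {t} ht0 ht1 => pen_combo u pen hpen x y ht0 ht1
  constructor
  · constructor
    · exact fun h1 => one_to_two X lam pen β hlam hconv h1
    · exact fun h2 => two_to_one X lam pen β hlam h2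
  · constructor
    · intro h2 b hb
      exact two_to_three X pen β h2 b hb
    · intro h3
      exact three_to_two X u hu pen hpen β (fun b hb => h3 b.ofLp hb)
end
end
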